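/- Let A(f) be a δ-compatible WNA algebra and define H(λ) := exp(Σ_{n≥1} (λⁿ/n) δₙ) as a formal power series of operators, and E(λ) := exp(−Σ_{n≥1} ((−λ)ⁿ/n) δₙ). Then E(−λ)H(λ) = id, and H(λ)(f) = Σ_{n≥0} λⁿ hₙ, E(λ)(f) = Σ_{n≥0} λⁿ eₙ, where hₙ = L_f^n(f), eₙ = R_f^n(f). Equivalently, hₙ = χₙ(δ₁, δ₂/2, δ₃/3, …)(f) where χₙ are the elementary Schur polynomials. -/

import Mathlib

/-- Derived products: `circ f (n-1) a b` is `a ∘ₙ b`. -/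
def circ {A : Type*} [NonUnitalNonAssocRing A] (f : A) : ℕ → A → A → A
  | 0, a, b => a * b
  | n+1, a, b => a * circ f n f b - circ f n (a * f) b

/-- `hₖ = L_f^k(f)`. -/
def hpow {A : Type*} [NonUnitalNonAssocRing A] (f : A) (k : ℕ) : A :=
  (fun x => f * x)^[k] f

/-- `eₖ = R_f^k(f)`. -/
def epow {A : Type*} [NonUnitalNonAssocRing A] (f : A) (k : ℕ) : A :=
  (fun x => x * f)^[k] f

/-- `pₖ = f ∘ₖ f` (for `k ≥ 1`). -/
def pprod {A : Type*} [NonUnitalNonAssocRing A] (f : A) (k : ℕ) : A :=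
  circ f (k - 1) f f

namespace ExpGenAux

variable {A : Type*} [NonUnitalNonAssocRing A]

lemma circ_zero_left (f : A) (n : ℕ) (b : A) : circ f n 0 b = 0 := by
  induction n generalizing b with
  | zero => simp [circ]
  | succ n ih => simp [circ, ih]

lemma circ_add_left (f : A) (n : ℕ) (a a' b : A) :
    circ f n (a + a') b = circ f n a b + circ f n a' b := by
  induction n generalizing a a' b with
  | zero => simp [circ, add_mul]
  | succ n ih => simp [circ, add_mul, ih]; abel

lemma circ_neg_left (f : A) (n : ℕ) (a b : A) :
    circ f n (-a) b = - circ f n a b := by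
  induction n generalizing a b with
  | zero => simp [circ]
  | succ n ih => simp [circ, neg_mul, ih]; abel

/-- additive closure of products -/
def pc (A : Type*) [NonUnitalNonAssocRing A] : AddSubgroup A :=
  AddSubgroup.closure {x : A | ∃ u v : A, x = u * v}

lemma mul_mem_pc (x : A) {m : A} (hm : m ∈ pc A) : x * m ∈ pc A := by
  induction hm using AddSubgroup.closure_induction with
  | mem y hy => exact AddSubgroup.subset_closure ⟨x, y, rfl⟩
  | zero => simpa using (pc A).zero_mem
  | add y z hy hz hy' hz' => rw [mul_add]; exact (pc A).add_mem hy' hz'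
  | neg y hy hy' => rw [mul_neg]; exact (pc A).neg_mem hy'

lemma circ_mem_pc (f : A) (n : ℕ) (a b : A) : circ f n a b ∈ pc A := by
  induction n generalizing a b with
  | zero => exact AddSubgroup.subset_closure ⟨a, b, rfl⟩
  | succ n ih => exact (pc A).sub_mem (mul_mem_pc a (ih f b)) (ih (a*f) b)

lemma hpow_zero (f : A) : hpow f 0 = f := rfl
lemma hpow_succ (f : A) (m : ℕ) : hpow f (m+1) = f * hpow f m :=
  Function.iterate_succ_apply' _ m f
lemma epow_zero (f : A) : epow f 0 = f := rfl
lemma epow_succ (f : A) (m : ℕ) : epow f (m+1) = epow f m * f :=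
  Function.iterate_succ_apply' _ m f

def Sv (f : A) (j m : ℕ) : A :=
  ∑ i ∈ Finset.range (m+1), (fun x => f * x)^[i] (circ f j f (hpow f (m-i)))

def Tv (f : A) (j m : ℕ) : A :=
  ∑ i ∈ Finset.range (m+1), (fun x => x * f)^[i] (circ f j (epow f (m-i)) f)

lemma Sv_zero (f : A) (j : ℕ) : Sv f j 0 = circ f j f f := by
  simp [Sv, hpow_zero]

lemma Tv_zero (f : A) (j : ℕ) : Tv f j 0 = circ f j f f := by
  simp [Tv, epow_zero]

lemma Sv_succ (f : A) (j m : ℕ) :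
    Sv f j (m+1) = circ f j f (hpow f (m+1)) + f * Sv f j m := by
  rw [Sv, Finset.sum_range_succ' _ (m+1)]
  simp only [Nat.sub_zero, Function.iterate_zero, id_eq]
  rw [Sv, Finset.mul_sum, add_comm]
  congr 1
  apply Finset.sum_congr rfl
  intro i hi
  have h : m + 1 - (i+1) = m - i := by omega
  rw [h, Function.iterate_succ_apply']

lemma Tv_succ (f : A) (j m : ℕ) :
    Tv f j (m+1) = circ f j (epow f (m+1)) f + (Tv f j m) * f := by
  rw [Tv, Finset.sum_range_succ' _ (m+1)]
  simp only [Nat.sub_zero, Function.iterate_zero, id_eq]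
  rw [Tv, Finset.sum_mul, add_comm]
  congr 1
  apply Finset.sum_congr rfl
  intro i hi
  have h : m + 1 - (i+1) = m - i := by omega
  rw [h, Function.iterate_succ_apply']

/-- reindexing `Icc 1 (n+1)` as `range (n+1)` -/
lemma sum_Icc_one {M : Type*} [AddCommMonoid M] (g : ℕ → M) (n : ℕ) :
    ∑ k ∈ Finset.Icc 1 (n+1), g k = ∑ i ∈ Finset.range (n+1), g (i+1) := by
  refine Finset.sum_nbij' (fun k => k - 1) (fun i => i + 1) ?_ ?_ ?_ ?_ ?_ <;>
      simp only [Finset.mem_Icc, Finset.mem_range] <;> intro a ha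
  · omega
  · omega
  · omega
  · omega
  · have h : a - 1 + 1 = a := by omega
    rw [h]

lemma Sv_head (f : A) (n : ℕ) : Sv f 0 n = (n+1) • hpow f (n+1) := by
  have key : ∀ i ∈ Finset.range (n+1),
      (fun x => f * x)^[i] (circ f 0 f (hpow f (n-i))) = hpow f (n+1) := by
    intro i hi
    rw [Finset.mem_range, Nat.lt_succ_iff] at hi
    have h1 : circ f 0 f (hpow f (n-i)) = hpow f (n-i+1) := by
      rw [hpow_succ]; rfl
    rw [h1]
    show (fun x => f * x)^[i] ((fun x => f * x)^[n-i+1] f) = (fun x => f * x)^[n+1] f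
    rw [← Function.iterate_add_apply]
    congr 1
    omega
  rw [Sv, Finset.sum_congr rfl key, Finset.sum_const, Finset.card_range]

lemma Tv_head (f : A) (n : ℕ) : Tv f 0 n = (n+1) • epow f (n+1) := by
  have key : ∀ i ∈ Finset.range (n+1),
      (fun x => x * f)^[i] (circ f 0 (epow f (n-i)) f) = epow f (n+1) := by
    intro i hi
    rw [Finset.mem_range, Nat.lt_succ_iff] at hi
    have h1 : circ f 0 (epow f (n-i)) f = epow f (n-i+1) := by
      rw [epow_succ]; rfl
    rw [h1]
    show (fun x => x * f)^[i] ((fun x => x * f)^[n-i+1] f) = (fun x => x * f)^[n+1] f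
    rw [← Function.iterate_add_apply]
    congr 1
    omega
  rw [Tv, Finset.sum_congr rfl key, Finset.sum_const, Finset.card_range]

lemma sgn_lemma (k j : ℕ) (h : j ≤ k+1) :
    ((-1:ℤ)^(k+1)) * ((-1:ℤ)^(j+1)) = -((-1:ℤ)^(k+1-j)) := by
  obtain ⟨d, hd⟩ : ∃ d, k+1 = j + d := ⟨k+1-j, by omega⟩
  have h2 : k+1-j = d := by omega
  have hjj : ((-1:ℤ)^j) * ((-1:ℤ)^j) = 1 := by
    rw [← pow_add, ← two_mul, pow_mul]; norm_num
  rw [h2, hd, pow_add, pow_succ]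
  calc ((-1:ℤ)^j * (-1)^d) * ((-1)^j * -1)
      = ((-1:ℤ)^j * (-1)^j) * ((-1)^d * -1) := by ring
    _ = -((-1:ℤ)^d) := by rw [hjj]; ring

variable (hW : ∀ a b c d : A, a * (b * c) * d = a * (b * c * d))
include hW

lemma L2prod (f : A) : ∀ (n : ℕ) (u v a b : A),
    a * circ f n (u * v) b = circ f n (a * (u * v)) b := by
  intro n
  induction n with
  | zero => intro u v a b; exact (hW a u v b).symm
  | succ n ih =>
    intro u v a b
    show a * ((u*v) * circ f n f b - circ f n ((u*v) * f) b)
      = (a * (u*v)) * circ f n f b - circ f n ((a * (u*v)) * f) b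
    rw [mul_sub, hW, ih (u*v) f a b, hW a u v f]

lemma L2 (f : A) {m : A} (hm : m ∈ pc A) :
    ∀ (n : ℕ) (a b : A), a * circ f n m b = circ f n (a * m) b := by
  induction hm using AddSubgroup.closure_induction with
  | mem y hy =>
    obtain ⟨u, v, rfl⟩ := hy
    exact fun n a b => L2prod hW f n u v a b
  | zero => intro n a b; simp [circ_zero_left]
  | add y z hy hz hy' hz' =>
    intro n a b
    rw [circ_add_left, mul_add, hy', hz', mul_add, circ_add_left]
  | neg y hy hy' =>
    intro n a b
    rw [circ_neg_left, mul_neg, hy', mul_neg, circ_neg_left]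

lemma L1 (f : A) : ∀ (i : ℕ) (a b : A),
    circ f i a (f * b) = circ f i a f * b + circ f (i+1) a b := by
  intro i
  induction i with
  | zero =>
    intro a b
    show a * (f * b) = (a * f) * b + (a * (f * b) - (a * f) * b)
    abel
  | succ i ih =>
    intro a b
    show a * circ f i f (f * b) - circ f i (a * f) (f * b) = _
    rw [ih f b, ih (a*f) b]
    have h1 : a * (circ f i f f * b) = (a * circ f i f f) * b :=
      L2 hW f (circ_mem_pc f i f f) 0 a b
    show a * (circ f i f f * b + circ f (i+1) f b)
        - (circ f i (a*f) f * b + circ f (i+1) (a*f) b)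
      = circ f (i+1) a f * b + circ f (i+2) a b
    have h2 : circ f (i+1) a f = a * circ f i f f - circ f i (a*f) f := rfl
    have h3 : circ f (i+2) a b = a * circ f (i+1) f b - circ f (i+1) (a*f) b := rfl
    rw [mul_add, h1, h2, h3, sub_mul]
    abel

omit hW

section Delta
variable (f : A) (δ : ℕ → A →+ A)
  (hder : ∀ k, 1 ≤ k → ∀ x y : A, δ k (x * y) = δ k x * y + x * δ k y)
  (hval : ∀ k, 1 ≤ k → δ k f = pprod f k)
include hder hval

lemma delta_f (j : ℕ) : δ (j+1) f = circ f j f f := by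
  have := hval (j+1) (Nat.le_add_left 1 j)
  simpa [pprod] using this

include hW in
lemma C1 : ∀ (m j : ℕ), δ (j+1) (hpow f (m+1)) = Sv f j (m+1) - Sv f (j+1) m := by
  intro m
  induction m with
  | zero =>
    intro j
    have hd : δ (j+1) (hpow f 1) = δ (j+1) f * f + f * δ (j+1) f := by
      rw [hpow_succ, hpow_zero]; exact hder (j+1) (Nat.le_add_left 1 j) f f
    rw [hd, delta_f f δ hder hval j, Sv_succ, Sv_zero, Sv_zero]
    have hL := L1 hW f j f f
    rw [hpow_succ, hpow_zero]
    have h2 : circ f j f f * f = circ f j f (f * f) - circ f (j+1) f f := by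
      rw [hL]; abel
    rw [h2]; abel
  | succ m ih =>
    intro j
    have hd : δ (j+1) (hpow f (m+2)) = δ (j+1) f * hpow f (m+1) + f * δ (j+1) (hpow f (m+1)) := by
      rw [hpow_succ f (m+1)]; exact hder (j+1) (Nat.le_add_left 1 j) f (hpow f (m+1))
    rw [hd, delta_f f δ hder hval j, ih j, mul_sub]
    have hL := L1 hW f j f (hpow f (m+1))
    have h2 : circ f j f f * hpow f (m+1)
        = circ f j f (f * hpow f (m+1)) - circ f (j+1) f (hpow f (m+1)) := by
      rw [hL]; abel
    rw [h2, ← hpow_succ f (m+1), Sv_succ f j (m+1), Sv_succ f (j+1) m]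
    abel

lemma C1E : ∀ (m j : ℕ), δ (j+1) (epow f (m+1)) = Tv f j (m+1) + Tv f (j+1) m := by
  intro m
  induction m with
  | zero =>
    intro j
    have hd : δ (j+1) (epow f 1) = δ (j+1) f * f + f * δ (j+1) f := by
      rw [epow_succ, epow_zero]; exact hder (j+1) (Nat.le_add_left 1 j) f f
    rw [hd, delta_f f δ hder hval j, Tv_succ, Tv_zero, Tv_zero]
    have h2 : f * circ f j f f = circ f j (f * f) f + circ f (j+1) f f := by
      have h : circ f (j+1) f f = f * circ f j f f - circ f j (f * f) f := rfl
      rw [h]; abel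
    rw [h2, epow_succ, epow_zero]; abel
  | succ m ih =>
    intro j
    have hd : δ (j+1) (epow f (m+2)) = δ (j+1) (epow f (m+1)) * f + epow f (m+1) * δ (j+1) f := by
      rw [epow_succ f (m+1)]; exact hder (j+1) (Nat.le_add_left 1 j) (epow f (m+1)) f
    rw [hd, delta_f f δ hder hval j, ih j, add_mul]
    have h2 : epow f (m+1) * circ f j f f
        = circ f j (epow f (m+1) * f) f + circ f (j+1) (epow f (m+1)) f := by
      have h : circ f (j+1) (epow f (m+1)) f
          = epow f (m+1) * circ f j f f - circ f j (epow f (m+1) * f) f := rfl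
      rw [h]; abel
    rw [h2, ← epow_succ f (m+1), Tv_succ f j (m+1), Tv_succ f (j+1) m]
    abel

include hW in
lemma Htel (n : ℕ) :
    ∑ k ∈ Finset.Icc 1 (n+1), δ k (hpow f (n+1-k)) = (n+1) • hpow f (n+1) := by
  rw [sum_Icc_one]
  have step : ∀ i ∈ Finset.range n,
      δ (i+1) (hpow f (n+1-(i+1))) = Sv f i (n-i) - Sv f (i+1) (n-(i+1)) := by
    intro i hi
    rw [Finset.mem_range] at hi
    have h1 : n+1-(i+1) = (n-1-i)+1 := by omega
    have h2 : n-i = (n-1-i)+1 := by omega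
    have h3 : n-(i+1) = n-1-i := by omega
    rw [h1, h2, h3, C1 hW f δ hder hval (n-1-i) i]
  rw [Finset.sum_range_succ, Finset.sum_congr rfl step,
    Finset.sum_range_sub' (fun j => Sv f j (n-j)) n]
  have h4 : n+1-(n+1) = 0 := by omega
  rw [h4, hpow_zero, delta_f f δ hder hval n, Nat.sub_self, Sv_zero, Sv_head]
  abel

lemma Etel (n : ℕ) :
    ∑ k ∈ Finset.Icc 1 (n+1), ((-1:ℤ)^(k+1)) • δ k (epow f (n+1-k))
      = (n+1) • epow f (n+1) := by
  rw [sum_Icc_one]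
  set G : ℕ → A := fun j => ((-1:ℤ)^j) • Tv f j (n-j) with hG
  have step : ∀ i ∈ Finset.range n,
      ((-1:ℤ)^(i+1+1)) • δ (i+1) (epow f (n+1-(i+1))) = G i - G (i+1) := by
    intro i hi
    rw [Finset.mem_range] at hi
    have h1 : n+1-(i+1) = (n-1-i)+1 := by omega
    have h3 : n-(i+1) = n-1-i := by omega
    rw [h1, C1E f δ hder hval (n-1-i) i, hG]
    simp only [h3]
    have h2 : n-i = (n-1-i)+1 := by omega
    rw [h2]
    have hsgn : ((-1:ℤ)^(i+1+1)) = (-1:ℤ)^i := by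
      rw [pow_succ, pow_succ]; ring
    have hsgn2 : ((-1:ℤ)^(i+1)) = -((-1:ℤ)^i) := by rw [pow_succ]; ring
    rw [hsgn, hsgn2, smul_add, neg_smul]
    abel
  rw [Finset.sum_range_succ, Finset.sum_congr rfl step, Finset.sum_range_sub' G n]
  have h4 : n+1-(n+1) = 0 := by omega
  rw [h4, epow_zero, delta_f f δ hder hval n]
  have h5 : ((-1:ℤ)^(n+1+1)) • circ f n f f = G n := by
    rw [hG]
    simp only [Nat.sub_self, Tv_zero]
    rw [pow_succ, pow_succ]; ring_nf
  rw [h5, hG]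
  simp only [pow_zero, one_smul, Nat.sub_zero]
  rw [Tv_head]
  abel

end Delta
end ExpGenAux

/-- Let `H(λ) = exp(Σ_{n≥1} (λⁿ/n) δₙ)` and `E(λ) = exp(−Σ_{n≥1} ((−λ)ⁿ/n) δₙ)`,
encoded by their coefficients `Hₙ = χₙ(δ₁,δ₂/2,…)`, `Eₙ = (−1)ⁿχₙ(−δ̃)`, which are
uniquely characterized (over ℚ) by `H₀ = id = E₀` together with the recursions
`n·Hₙ = Σ_{k=1}^n δₖ∘H_{n−k}` and `n·Eₙ = Σ_{k=1}^n (−1)^{k+1} δₖ∘E_{n−k}`.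
Then `E(−λ)H(λ) = id` (coefficientwise: `Σ_{k=0}^n (−1)^k Eₖ H_{n−k} = 0` for `n ≥ 1`)
and `H(λ)(f) = Σ λⁿ hₙ`, `E(λ)(f) = Σ λⁿ eₙ`, i.e. `Hₙ(f) = hₙ`, `Eₙ(f) = eₙ`. -/
theorem exp_generating_functions {A : Type*} [NonUnitalNonAssocRing A] [Module ℚ A]
    (hW : ∀ a b c d : A, a * (b * c) * d = a * (b * c * d)) (f : A)
    (δ : ℕ → A →+ A)
    (hder : ∀ k, 1 ≤ k → ∀ x y : A, δ k (x * y) = δ k x * y + x * δ k y)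
    (hval : ∀ k, 1 ≤ k → δ k f = pprod f k)
    (hcomm : ∀ m n, ∀ x : A, δ m (δ n x) = δ n (δ m x))
    (H E : ℕ → A →+ A)
    (hH0 : ∀ x : A, H 0 x = x) (hE0 : ∀ x : A, E 0 x = x)
    (hHrec : ∀ (n : ℕ) (x : A),
      (n + 1) • H (n+1) x = ∑ k ∈ Finset.Icc 1 (n+1), δ k (H (n + 1 - k) x))
    (hErec : ∀ (n : ℕ) (x : A),
      (n + 1) • E (n+1) x
        = ∑ k ∈ Finset.Icc 1 (n+1), ((-1 : ℤ)^(k+1)) • δ k (E (n + 1 - k) x)) :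
    (∀ n : ℕ, 1 ≤ n → ∀ x : A,
      ∑ k ∈ Finset.range (n+1), ((-1 : ℤ)^k) • E k (H (n - k) x) = 0) ∧
    (∀ n : ℕ, H n f = hpow f n) ∧
    (∀ n : ℕ, E n f = epow f n) := by
  have cancel : ∀ (m : ℕ) (x y : A), 0 < m → m • x = m • y → x = y := by
    intro m x y hm h
    have h' : (m:ℚ) • x = (m:ℚ) • y := by
      rw [Nat.cast_smul_eq_nsmul, Nat.cast_smul_eq_nsmul]; exact h
    have hc : (m:ℚ) ≠ 0 := by exact_mod_cast hm.ne'
    have := congrArg (fun z => ((m:ℚ))⁻¹ • z) h'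
    simpa [inv_smul_smul₀ hc] using this
  have hHf : ∀ n, H n f = hpow f n := by
    intro n
    induction n using Nat.strong_induction_on with
    | _ n ih =>
      match n, ih with
      | 0, _ => exact hH0 f
      | (n+1), ih =>
        apply cancel (n+1) _ _ (Nat.succ_pos n)
        have ht : ∀ k ∈ Finset.Icc 1 (n+1), δ k (H (n+1-k) f) = δ k (hpow f (n+1-k)) := by
          intro k hk
          rw [Finset.mem_Icc] at hk
          rw [ih (n+1-k) (by omega)]
        rw [hHrec n f, Finset.sum_congr rfl ht, ExpGenAux.Htel hW f δ hder hval n]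
  have hEf : ∀ n, E n f = epow f n := by
    intro n
    induction n using Nat.strong_induction_on with
    | _ n ih =>
      match n, ih with
      | 0, _ => exact hE0 f
      | (n+1), ih =>
        apply cancel (n+1) _ _ (Nat.succ_pos n)
        have ht : ∀ k ∈ Finset.Icc 1 (n+1),
            ((-1:ℤ)^(k+1)) • δ k (E (n+1-k) f) = ((-1:ℤ)^(k+1)) • δ k (epow f (n+1-k)) := by
          intro k hk
          rw [Finset.mem_Icc] at hk
          rw [ih (n+1-k) (by omega)]
        rw [hErec n f, Finset.sum_congr rfl ht, ExpGenAux.Etel f δ hder hval n]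
  have hcommE : ∀ k (m : ℕ) (x : A), δ m (E k x) = E k (δ m x) := by
    intro k
    induction k using Nat.strong_induction_on with
    | _ k ih =>
      match k, ih with
      | 0, _ => intro m x; rw [hE0, hE0]
      | (k+1), ih =>
        intro m x
        apply cancel (k+1) _ _ (Nat.succ_pos k)
        rw [← AddMonoidHom.map_nsmul, hErec k x, map_sum, hErec k (δ m x)]
        apply Finset.sum_congr rfl
        intro j hj
        rw [Finset.mem_Icc] at hj
        rw [AddMonoidHom.map_zsmul, hcomm m j, ih (k+1-j) (by omega) m x]
  refine ⟨?_, hHf, hEf⟩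
  intro n hn x
  apply cancel n _ 0 hn
  rw [smul_zero, Finset.smul_sum]
  have hsplit : ∀ k ∈ Finset.range (n+1),
      n • (((-1:ℤ)^k) • E k (H (n-k) x))
        = ((-1:ℤ)^k) • (k • E k (H (n-k) x)) + ((-1:ℤ)^k) • ((n-k) • E k (H (n-k) x)) := by
    intro k hk
    rw [Finset.mem_range, Nat.lt_succ_iff] at hk
    rw [smul_comm, ← smul_add, ← add_nsmul]
    have h1 : k + (n - k) = n := by omega
    rw [h1]
  rw [Finset.sum_congr rfl hsplit, Finset.sum_add_distrib]
  have hA : ∑ k ∈ Finset.range (n+1), ((-1:ℤ)^k) • (k • E k (H (n-k) x))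
      = ∑ p ∈ (Finset.range n).sigma (fun k => Finset.Icc 1 (k+1)),
          (((-1:ℤ)^(p.1+1)) * ((-1:ℤ)^(p.2+1))) • δ p.2 (E (p.1+1-p.2) (H (n-(p.1+1)) x)) := by
    rw [Finset.sum_range_succ']
    simp only [zero_smul, smul_zero, add_zero, pow_zero]
    rw [Finset.sum_sigma]
    apply Finset.sum_congr rfl
    intro k hk
    rw [hErec k (H (n-(k+1)) x), Finset.smul_sum]
    apply Finset.sum_congr rfl
    intro j hj
    rw [smul_smul]
  have hB : ∑ k ∈ Finset.range (n+1), ((-1:ℤ)^k) • ((n-k) • E k (H (n-k) x))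
      = ∑ p ∈ (Finset.range n).sigma (fun k => Finset.Icc 1 (n-k)),
          ((-1:ℤ)^p.1) • δ p.2 (E p.1 (H (n-p.1-p.2) x)) := by
    rw [Finset.sum_range_succ]
    simp only [Nat.sub_self, zero_smul, smul_zero, add_zero]
    rw [Finset.sum_sigma]
    apply Finset.sum_congr rfl
    intro k hk
    rw [Finset.mem_range] at hk
    have h1 : n - k = (n-k-1)+1 := by omega
    rw [← AddMonoidHom.map_nsmul, h1, hHrec (n-k-1) x, map_sum, Finset.smul_sum]
    apply Finset.sum_congr rfl
    intro j hj
    rw [Finset.mem_Icc] at hj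
    rw [← hcommE k j]
    rw [show n-k-1+1-j = n-k-j from by omega]
  rw [hA, hB]
  have hAB : ∑ p ∈ (Finset.range n).sigma (fun k => Finset.Icc 1 (k+1)),
          (((-1:ℤ)^(p.1+1)) * ((-1:ℤ)^(p.2+1))) • δ p.2 (E (p.1+1-p.2) (H (n-(p.1+1)) x))
      = ∑ p ∈ (Finset.range n).sigma (fun k => Finset.Icc 1 (n-k)),
          -(((-1:ℤ)^p.1) • δ p.2 (E p.1 (H (n-p.1-p.2) x))) := by
    apply Finset.sum_nbij' (fun p => ⟨p.1+1-p.2, p.2⟩) (fun p => ⟨p.1+p.2-1, p.2⟩)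
    · rintro ⟨k, j⟩ hp
      simp only [Finset.mem_sigma, Finset.mem_range, Finset.mem_Icc] at hp ⊢
      omega
    · rintro ⟨k, j⟩ hp
      simp only [Finset.mem_sigma, Finset.mem_range, Finset.mem_Icc] at hp ⊢
      omega
    · rintro ⟨k, j⟩ hp
      simp only [Finset.mem_sigma, Finset.mem_range, Finset.mem_Icc] at hp
      simp only [Sigma.mk.inj_iff, heq_eq_eq, and_true]
      omega
    · rintro ⟨k, j⟩ hp
      simp only [Finset.mem_sigma, Finset.mem_range, Finset.mem_Icc] at hp
      simp only [Sigma.mk.inj_iff, heq_eq_eq, and_true]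
      omega
    · rintro ⟨k, j⟩ hp
      simp only [Finset.mem_sigma, Finset.mem_range, Finset.mem_Icc] at hp
      obtain ⟨hk, hj1, hj2⟩ := hp
      rw [ExpGenAux.sgn_lemma k j (by omega), neg_smul, neg_inj,
        show n-(k+1-j)-j = n-(k+1) from by omega]
  rw [hAB, Finset.sum_neg_distrib]
  abel
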